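/- For every n ≥ 0, the polynomial complex ℝ → P_{n+2}(ℝ³) → [P_{n+1}(ℝ³)]³ → [P_n(ℝ³)]³ → P_{n-1}(ℝ³) → 0, with maps given by inclusion of constants, gradient, curl, and divergence, is exact: the kernel of ∇ on P_{n+2} is the constants, the kernel of curl on [P_{n+1}]³ equals the image of ∇, the kernel of div on [P_n]³ equals the image of curl, and div maps [P_n]³ onto P_{n-1}. -/

import Mathlib

open MvPolynomial

noncomputable section

abbrev Poly3 := MvPolynomial (Fin 3) ℝ

/-- `p ∈ P_m(ℝ³)` (total degree at most `m`, with `P_m = {0}` for `m < 0`). -/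
def degLE (m : ℤ) (p : Poly3) : Prop := p = 0 ∨ (p.totalDegree : ℤ) ≤ m

/-- Gradient of a scalar polynomial. -/
def pgrad (q : Poly3) : Fin 3 → Poly3 := fun i => pderiv i q

/-- Curl of a vector polynomial. -/
def pcurl (v : Fin 3 → Poly3) : Fin 3 → Poly3 :=
  ![pderiv 1 (v 2) - pderiv 2 (v 1),
    pderiv 2 (v 0) - pderiv 0 (v 2),
    pderiv 0 (v 1) - pderiv 1 (v 0)]

/-- Divergence of a vector polynomial. -/
def pdiv (v : Fin 3 → Poly3) : Poly3 := ∑ i, pderiv i (v i)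

def e (i : Fin 3) : Fin 3 →₀ ℕ := Finsupp.single i 1

lemma e_apply (i k : Fin 3) : e i k = if i = k then 1 else 0 := Finsupp.single_apply

lemma fs_cancel (β : Fin 3 →₀ ℕ) (j : Fin 3) : β + e j - e j = β := by
  ext k; simp [e_apply, Finsupp.tsub_apply, Finsupp.add_apply]

lemma fs_cancel' (β : Fin 3 →₀ ℕ) (j : Fin 3) (h : β j ≠ 0) : β - e j + e j = β := by
  have hj : β j ≠ 0 := h
  ext k
  simp only [Finsupp.add_apply, Finsupp.tsub_apply, e_apply]
  split_ifs with hk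
  · subst hk; omega
  · omega

lemma apply_add_e (β : Fin 3 →₀ ℕ) (i k : Fin 3) :
    (β + e i) k = β k + if i = k then 1 else 0 := by
  simp [Finsupp.add_apply, e_apply]

lemma coeff_pderiv (i : Fin 3) (p : Poly3) (β : Fin 3 →₀ ℕ) :
    coeff β (pderiv i p) = ((β i : ℝ) + 1) * coeff (β + e i) p := by
  induction p using MvPolynomial.induction_on' with
  | monomial α a =>
    rw [pderiv_monomial, coeff_monomial, coeff_monomial]
    by_cases h : α = β + e i
    · subst h
      rw [show β + e i - Finsupp.single i 1 = β from fs_cancel β i, if_pos rfl]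
      rw [show (β + e i) i = β i + 1 by rw [apply_add_e]; simp]
      simp only [if_true]
      push_cast; ring
    · rw [if_neg h]
      by_cases h2 : α - Finsupp.single i 1 = β
      · rw [if_pos h2]
        have hαi : α i = 0 := by
          by_contra hαi
          exact h (by rw [← h2]; exact (fs_cancel' α i hαi).symm)
        simp [hαi]
      · rw [if_neg h2]; ring
  | add p q hp hq => simp only [map_add, coeff_add, hp, hq]; ring

lemma pd_comm (i j : Fin 3) (p : Poly3) :
    pderiv i (pderiv j p) = pderiv j (pderiv i p) := by
  apply MvPolynomial.ext
  intro β
  rw [coeff_pderiv, coeff_pderiv, coeff_pderiv, coeff_pderiv]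
  rw [add_right_comm β (e j) (e i)]
  rw [apply_add_e, apply_add_e]
  by_cases h : i = j
  · subst h; simp
  · rw [if_neg h, if_neg (Ne.symm h)]; push_cast; ring

def lift (j : Fin 3) (f : (Fin 3 →₀ ℕ) → ℝ) (p : Poly3) : Poly3 :=
  ∑ α ∈ p.support, monomial (α + e j) (f α * p.coeff α)

lemma coeff_lift (j : Fin 3) (f : (Fin 3 →₀ ℕ) → ℝ) (p : Poly3) (β : Fin 3 →₀ ℕ) :
    coeff β (lift j f p) =
      if β j = 0 then 0 else f (β - e j) * p.coeff (β - e j) := by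
  rw [lift, coeff_sum]
  simp only [coeff_monomial]
  by_cases hβ : β j = 0
  · rw [if_pos hβ]
    apply Finset.sum_eq_zero
    intro α _
    rw [if_neg]
    intro hc
    have h2 : (α + e j) j = β j := by rw [hc]
    rw [apply_add_e, if_pos rfl] at h2
    omega
  · rw [if_neg hβ]
    have key : ∀ α : Fin 3 →₀ ℕ, (α + e j = β) ↔ α = β - e j := by
      intro α
      constructor
      · intro h; rw [← h, fs_cancel]
      · intro h; rw [h, fs_cancel' β j hβ]
    calc (∑ α ∈ p.support, if α + e j = β then f α * p.coeff α else 0)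
        = ∑ α ∈ p.support, if α = β - e j then f α * p.coeff α else 0 := by
          apply Finset.sum_congr rfl; intro α _; exact if_congr (key α) rfl rfl
      _ = if β - e j ∈ p.support then f (β - e j) * p.coeff (β - e j) else 0 := by
          rw [Finset.sum_ite_eq' p.support]
      _ = f (β - e j) * p.coeff (β - e j) := by
          split_ifs with h
          · rfl
          · rw [MvPolynomial.notMem_support_iff.mp h, mul_zero]

lemma pderiv_lift_same (j : Fin 3) (f : (Fin 3 →₀ ℕ) → ℝ) (p : Poly3) (β : Fin 3 →₀ ℕ) :
    coeff β (pderiv j (lift j f p)) = ((β j : ℝ) + 1) * (f β * coeff β p) := by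
  rw [coeff_pderiv, coeff_lift]
  have h1 : (β + e j) j ≠ 0 := by rw [apply_add_e]; simp
  rw [if_neg h1, fs_cancel]

lemma pderiv_lift_ne (i j : Fin 3) (hij : i ≠ j) (f : (Fin 3 →₀ ℕ) → ℝ) (p : Poly3)
    (β : Fin 3 →₀ ℕ) :
    coeff β (pderiv i (lift j f p)) =
      if β j = 0 then 0
      else ((β i : ℝ) + 1) * (f (β + e i - e j) * coeff (β + e i - e j) p) := by
  rw [coeff_pderiv, coeff_lift]
  have h1 : (β + e i) j = β j := by rw [apply_add_e]; simp [hij]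
  rw [h1]
  split_ifs with h
  · ring
  · ring

def dsum (γ : Fin 3 →₀ ℕ) : ℕ := γ 0 + γ 1 + γ 2

lemma fs_swap (β : Fin 3 →₀ ℕ) (i j : Fin 3) (hij : i ≠ j) :
    β - e i + e j = β + e j - e i := by
  ext k
  simp only [Finsupp.add_apply, Finsupp.tsub_apply, e_apply]
  split_ifs with h1 h2 h2
  · exact absurd (h1.trans h2.symm) hij
  · omega
  · omega
  · omega

lemma dsum_move (β : Fin 3 →₀ ℕ) (i j : Fin 3) (hij : i ≠ j) (hβ : β j ≠ 0) :
    dsum (β + e i - e j) = dsum β := by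
  unfold dsum
  simp only [Finsupp.tsub_apply, Finsupp.add_apply, e_apply]
  fin_cases i <;> fin_cases j <;> simp_all <;> omega

lemma totalDegree_lift_le (j : Fin 3) (f : (Fin 3 →₀ ℕ) → ℝ) (p : Poly3) :
    (lift j f p).totalDegree ≤ p.totalDegree + 1 := by
  apply totalDegree_finsetSum_le
  intro α hα
  refine (totalDegree_monomial_le _ _).trans ?_
  have h1 : (α + e j).sum (fun _ => id) = α.sum (fun _ => id) + 1 := by
    rw [Finsupp.sum_add_index' (fun _ => rfl) (fun _ _ _ => rfl)]
    rw [e, Finsupp.sum_single_index rfl]; rfl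
  rw [h1]
  exact Nat.add_le_add_right (le_totalDegree hα) 1

lemma degLE_lift {m : ℤ} (j : Fin 3) (f : (Fin 3 →₀ ℕ) → ℝ) {p : Poly3}
    (hp : degLE m p) : degLE (m + 1) (lift j f p) := by
  rcases hp with rfl | h
  · left; simp [lift]
  · right
    calc ((lift j f p).totalDegree : ℤ) ≤ (p.totalDegree : ℤ) + 1 := by
          exact_mod_cast totalDegree_lift_le j f p
      _ ≤ m + 1 := by omega

lemma degLE_add {m : ℤ} {p q : Poly3} (hp : degLE m p) (hq : degLE m q) :
    degLE m (p + q) := by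
  rcases hp with rfl | hp
  · rw [zero_add]; exact hq
  rcases hq with rfl | hq
  · rw [add_zero]; right; exact hp
  right
  calc ((p + q).totalDegree : ℤ) ≤ ((max p.totalDegree q.totalDegree : ℕ) : ℤ) := by
        exact_mod_cast totalDegree_add p q
    _ ≤ m := by rw [Nat.cast_max]; exact max_le hp hq

lemma degLE_sub {m : ℤ} {p q : Poly3} (hp : degLE m p) (hq : degLE m q) :
    degLE m (p - q) := by
  rw [sub_eq_add_neg]
  apply degLE_add hp
  rcases hq with rfl | hq
  · left; simp
  · right; rw [totalDegree_neg]; exact hq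

lemma curl_coeff {v w : Poly3} {i j : Fin 3} (hij : i ≠ j) (hs : pderiv i w = pderiv j v)
    (β : Fin 3 →₀ ℕ) (hβ : β j ≠ 0) :
    ((β i : ℝ) + 1) * coeff (β + e i - e j) w = (β j : ℝ) * coeff β v := by
  have h := congrArg (coeff (β - e j)) hs
  rw [coeff_pderiv, coeff_pderiv] at h
  have h1 : ((β - e j) i) = β i := by
    simp [Finsupp.tsub_apply, e_apply, Ne.symm hij]
  have h2 : ((β - e j) j : ℕ) = β j - 1 := by
    simp [Finsupp.tsub_apply, e_apply]
  have h3 : β - e j + e j = β := fs_cancel' β j hβ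
  have h4 : β - e j + e i = β + e i - e j := fs_swap β j i (Ne.symm hij)
  rw [h1, h2, h3, h4] at h
  rw [h]
  congr 1
  have hβ1 : 1 ≤ β j := Nat.one_le_iff_ne_zero.mpr hβ
  push_cast [Nat.cast_sub hβ1]
  ring

lemma grad_exists (v : Fin 3 → Poly3) (hsym : ∀ i j, pderiv i (v j) = pderiv j (v i))
    (i : Fin 3) :
    pderiv i (∑ j, lift j (fun α => 1 / ((dsum α : ℝ) + 1)) (v j)) = v i := by
  apply MvPolynomial.ext
  intro β
  rw [map_sum, coeff_sum, Fin.sum_univ_three]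
  have hds : ((dsum β : ℕ) : ℝ) = (β 0 : ℝ) + (β 1 : ℝ) + (β 2 : ℝ) := by
    unfold dsum; push_cast; ring
  have hd : ((dsum β : ℝ) + 1) ≠ 0 := by positivity
  have hterm : ∀ j, coeff β (pderiv i (lift j (fun α => 1 / ((dsum α : ℝ) + 1)) (v j)))
      = (if j = i then (β i : ℝ) + 1 else (β j : ℝ)) *
        (1 / ((dsum β : ℝ) + 1) * coeff β (v i)) := by
    intro j
    by_cases hj : j = i
    · subst hj; rw [pderiv_lift_same, if_pos rfl]
    · rw [pderiv_lift_ne i j (fun h => hj h.symm), if_neg hj]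
      by_cases hβ : β j = 0
      · rw [if_pos hβ, hβ]; simp
      · rw [if_neg hβ, dsum_move β i j (fun h => hj h.symm) hβ]
        have hc := curl_coeff (v := v i) (w := v j) (fun h => hj h.symm) (hsym i j) β hβ
        calc ((β i : ℝ) + 1) * (1 / ((dsum β : ℝ) + 1) * coeff (β + e i - e j) (v j))
            = 1 / ((dsum β : ℝ) + 1) * (((β i : ℝ) + 1) * coeff (β + e i - e j) (v j)) := by
              ring
          _ = 1 / ((dsum β : ℝ) + 1) * ((β j : ℝ) * coeff β (v i)) := by rw [hc]
          _ = (β j : ℝ) * (1 / ((dsum β : ℝ) + 1) * coeff β (v i)) := by ring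
  rw [hterm 0, hterm 1, hterm 2]
  have hsum : ((if (0 : Fin 3) = i then (β i : ℝ) + 1 else (β 0 : ℝ))
      + (if (1 : Fin 3) = i then (β i : ℝ) + 1 else (β 1 : ℝ))
      + (if (2 : Fin 3) = i then (β i : ℝ) + 1 else (β 2 : ℝ))) = (dsum β : ℝ) + 1 := by
    fin_cases i <;> simp_all <;> ring
  calc _ = ((if (0 : Fin 3) = i then (β i : ℝ) + 1 else (β 0 : ℝ))
      + (if (1 : Fin 3) = i then (β i : ℝ) + 1 else (β 1 : ℝ))
      + (if (2 : Fin 3) = i then (β i : ℝ) + 1 else (β 2 : ℝ)))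
        * (1 / ((dsum β : ℝ) + 1) * coeff β (v i)) := by ring
    _ = coeff β (v i) := by rw [hsum]; field_simp

lemma div_coeff {v : Fin 3 → Poly3} (h : (∑ m, pderiv m (v m)) = 0) (γ : Fin 3 →₀ ℕ) :
    ((γ 0 : ℝ) + 1) * coeff (γ + e 0) (v 0) + ((γ 1 : ℝ) + 1) * coeff (γ + e 1) (v 1)
      + ((γ 2 : ℝ) + 1) * coeff (γ + e 2) (v 2) = 0 := by
  rw [Fin.sum_univ_three] at h
  have h2 := congrArg (coeff γ) h
  rw [coeff_add, coeff_add, coeff_pderiv, coeff_pderiv, coeff_pderiv, coeff_zero] at h2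
  exact h2

lemma curl_exists_gen (v : Fin 3 → Poly3) (i j k : Fin 3)
    (hji : j ≠ i) (hki : k ≠ i)
    (hdc : ∀ γ : Fin 3 →₀ ℕ,
      ((γ i : ℝ) + 1) * coeff (γ + e i) (v i) + ((γ j : ℝ) + 1) * coeff (γ + e j) (v j)
        + ((γ k : ℝ) + 1) * coeff (γ + e k) (v k) = 0)
    (hd3 : ∀ β : Fin 3 →₀ ℕ, ((dsum β : ℕ) : ℝ) = (β i : ℝ) + (β j : ℝ) + (β k : ℝ)) :
    pderiv j (lift j (fun α => 1 / ((dsum α : ℝ) + 2)) (v i)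
        - lift i (fun α => 1 / ((dsum α : ℝ) + 2)) (v j))
      - pderiv k (lift i (fun α => 1 / ((dsum α : ℝ) + 2)) (v k)
        - lift k (fun α => 1 / ((dsum α : ℝ) + 2)) (v i)) = v i := by
  apply MvPolynomial.ext
  intro β
  rw [map_sub, map_sub, coeff_sub, coeff_sub, coeff_sub,
      pderiv_lift_same j _ (v i) β, pderiv_lift_same k _ (v i) β,
      pderiv_lift_ne j i hji _ (v j) β, pderiv_lift_ne k i hki _ (v k) β]
  have hd : ((dsum β : ℝ) + 2) ≠ 0 := by positivity
  by_cases hβ : β i = 0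
  · rw [if_pos hβ, if_pos hβ]
    have hds : (dsum β : ℝ) = (β j : ℝ) + (β k : ℝ) := by rw [hd3 β, hβ]; push_cast; ring
    rw [hds] at *
    field_simp
    ring
  · rw [if_neg hβ, if_neg hβ]
    rw [dsum_move β j i hji hβ, dsum_move β k i hki hβ]
    have hdc' := hdc (β - e i)
    have h1i : ((β - e i) i : ℕ) = β i - 1 := by simp [Finsupp.tsub_apply, e_apply]
    have h1j : ((β - e i) j : ℕ) = β j := by simp [Finsupp.tsub_apply, e_apply, hji.symm]
    have h1k : ((β - e i) k : ℕ) = β k := by simp [Finsupp.tsub_apply, e_apply, hki.symm]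
    have h2i : β - e i + e i = β := fs_cancel' β i hβ
    have h2j : β - e i + e j = β + e j - e i := fs_swap β i j (Ne.symm hji)
    have h2k : β - e i + e k = β + e k - e i := fs_swap β i k (Ne.symm hki)
    rw [h1i, h1j, h1k, h2i, h2j, h2k] at hdc'
    have hβ1 : 1 ≤ β i := Nat.one_le_iff_ne_zero.mpr hβ
    rw [show ((β i - 1 : ℕ) : ℝ) + 1 = (β i : ℝ) by push_cast [Nat.cast_sub hβ1]; ring] at hdc'
    have hds := hd3 β
    field_simp
    linear_combination (-1 : ℝ) * hdc' - coeff β (v i) * hds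

lemma eq_C_of_grad_zero {q : Poly3} (h : ∀ i, pderiv i q = 0) : q = C (coeff 0 q) := by
  apply MvPolynomial.ext
  intro β
  rw [coeff_C]
  by_cases hβ : 0 = β
  · rw [if_pos hβ, ← hβ]
  · rw [if_neg hβ]
    have hex : ∃ i, β i ≠ 0 := by
      by_contra hc
      push_neg at hc
      exact hβ (Finsupp.ext fun k => (hc k).symm)
    obtain ⟨i, hi⟩ := hex
    have h2 := congrArg (coeff (β - e i)) (h i)
    rw [coeff_pderiv, fs_cancel' β i hi, coeff_zero] at h2
    have hne : ((((β - e i) i : ℕ) : ℝ) + 1) ≠ 0 := by positivity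
    exact (mul_eq_zero.mp h2).resolve_left hne

lemma pcurl_pgrad (q : Poly3) : pcurl (pgrad q) = 0 := by
  funext i
  fin_cases i <;> simp [pcurl, pgrad] <;>
    [exact sub_eq_zero.mpr (pd_comm 1 2 q); exact sub_eq_zero.mpr (pd_comm 2 0 q);
     exact sub_eq_zero.mpr (pd_comm 0 1 q)]

lemma pdiv_pcurl (w : Fin 3 → Poly3) : pdiv (pcurl w) = 0 := by
  simp only [pdiv, pcurl, Fin.sum_univ_three, Matrix.cons_val_zero, Matrix.cons_val_one,
    Matrix.head_cons, map_sub]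
  have hw2 : (![pderiv 1 (w 2) - pderiv 2 (w 1), pderiv 2 (w 0) - pderiv 0 (w 2),
      pderiv 0 (w 1) - pderiv 1 (w 0)] : Fin 3 → Poly3) 2 = pderiv 0 (w 1) - pderiv 1 (w 0) := rfl
  rw [hw2, map_sub]
  linear_combination pd_comm 0 1 (w 2) + pd_comm 1 2 (w 0) + pd_comm 2 0 (w 1)

lemma pderiv_lift_eq (j : Fin 3) (f : (Fin 3 →₀ ℕ) → ℝ) (hf : ∀ β, ((f β) * ((β j : ℝ) + 1)) = 1)
    (p : Poly3) : pderiv j (lift j f p) = p := by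
  apply MvPolynomial.ext
  intro β
  rw [pderiv_lift_same]
  have := hf β
  calc ((β j : ℝ) + 1) * (f β * coeff β p) = (f β * ((β j : ℝ) + 1)) * coeff β p := by ring
    _ = coeff β p := by rw [hf β]; ring

set_option maxHeartbeats 1000000 in
/-- Exactness of the polynomial complex
`ℝ → P_{n+2} → [P_{n+1}]³ → [P_n]³ → P_{n-1} → 0` with maps inclusion of constants,
gradient, curl and divergence. -/
theorem poly_complex_exact (n : ℕ) :
    -- kernel of ∇ on P_{n+2} is the constants
    (∀ q : Poly3, degLE ((n : ℤ) + 2) q → (pgrad q = 0 ↔ ∃ c : ℝ, q = C c)) ∧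
    -- kernel of curl on [P_{n+1}]³ equals the image of ∇
    (∀ v : Fin 3 → Poly3, (∀ i, degLE ((n : ℤ) + 1) (v i)) →
      (pcurl v = 0 ↔ ∃ q : Poly3, degLE ((n : ℤ) + 2) q ∧ v = pgrad q)) ∧
    -- kernel of div on [P_n]³ equals the image of curl
    (∀ v : Fin 3 → Poly3, (∀ i, degLE (n : ℤ) (v i)) →
      (pdiv v = 0 ↔ ∃ w : Fin 3 → Poly3, (∀ i, degLE ((n : ℤ) + 1) (w i)) ∧ v = pcurl w)) ∧
    -- div maps [P_n]³ onto P_{n-1}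
    (∀ p : Poly3, degLE ((n : ℤ) - 1) p →
      ∃ v : Fin 3 → Poly3, (∀ i, degLE (n : ℤ) (v i)) ∧ pdiv v = p) := by
  refine ⟨?_, ?_, ?_, ?_⟩
  · -- part 1
    intro q _
    constructor
    · intro h
      refine ⟨coeff 0 q, eq_C_of_grad_zero fun i => ?_⟩
      exact congrFun h i
    · rintro ⟨c, rfl⟩
      funext i
      simp [pgrad]
  · -- part 2
    intro v hv
    constructor
    · intro hcurl
      have e1 : pderiv 1 (v 2) = pderiv 2 (v 1) := by
        have := congrFun hcurl 0
        simpa [pcurl, sub_eq_zero] using this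
      have e2 : pderiv 2 (v 0) = pderiv 0 (v 2) := by
        have := congrFun hcurl 1
        simpa [pcurl, sub_eq_zero] using this
      have e3 : pderiv 0 (v 1) = pderiv 1 (v 0) := by
        have := congrFun hcurl 2
        simpa [pcurl, sub_eq_zero] using this
      have hsym : ∀ i j, pderiv i (v j) = pderiv j (v i) := by
        intro i j
        fin_cases i <;> fin_cases j <;>
          first
            | rfl
            | exact e1 | exact e1.symm | exact e2 | exact e2.symm
            | exact e3 | exact e3.symm
      refine ⟨∑ j, lift j (fun α => 1 / ((dsum α : ℝ) + 1)) (v j), ?_, ?_⟩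
      · have h22 : (n : ℤ) + 1 + 1 = (n : ℤ) + 2 := by ring
        rw [← h22, Fin.sum_univ_three]
        exact degLE_add (degLE_add (degLE_lift _ _ (hv 0)) (degLE_lift _ _ (hv 1)))
          (degLE_lift _ _ (hv 2))
      · funext i
        exact (grad_exists v hsym i).symm
    · rintro ⟨q, _, rfl⟩
      exact pcurl_pgrad q
  · -- part 3
    intro v hv
    constructor
    · intro hdiv
      have hdiv' : (∑ m, pderiv m (v m)) = 0 := hdiv
      set L : Fin 3 → Poly3 → Poly3 := fun j p => lift j (fun α => 1 / ((dsum α : ℝ) + 2)) p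
        with hL
      refine ⟨![L 2 (v 1) - L 1 (v 2), L 0 (v 2) - L 2 (v 0), L 1 (v 0) - L 0 (v 1)], ?_, ?_⟩
      · intro i
        fin_cases i <;>
          exact degLE_sub (degLE_lift _ _ (hv _)) (degLE_lift _ _ (hv _))
      · funext i
        have hc0 := curl_exists_gen v 0 1 2 (by decide) (by decide)
          (fun γ => div_coeff hdiv' γ)
          (fun β => by unfold dsum; push_cast; ring)
        have hc1 := curl_exists_gen v 1 2 0 (by decide) (by decide)
          (fun γ => by linear_combination div_coeff hdiv' γ)
          (fun β => by unfold dsum; push_cast; ring)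
        have hc2 := curl_exists_gen v 2 0 1 (by decide) (by decide)
          (fun γ => by linear_combination div_coeff hdiv' γ)
          (fun β => by unfold dsum; push_cast; ring)
        fin_cases i
        · exact (show pcurl _ 0 = _ from by
            simp only [pcurl, Matrix.cons_val_zero, Matrix.cons_val_one, Matrix.head_cons]
            exact hc0).symm
        · exact (show pcurl _ 1 = _ from by
            simp only [pcurl, Matrix.cons_val_zero, Matrix.cons_val_one, Matrix.head_cons]
            exact hc1).symm
        · exact (show pcurl _ 2 = _ from by
            simp only [pcurl, Matrix.cons_val_zero, Matrix.cons_val_one, Matrix.head_cons]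
            exact hc2).symm
    · rintro ⟨w, _, rfl⟩
      exact pdiv_pcurl w
  · -- part 4
    intro p hp
    refine ⟨![lift 0 (fun α => 1 / ((α 0 : ℝ) + 1)) p, 0, 0], ?_, ?_⟩
    · intro i
      fin_cases i
      · have h11 : (n : ℤ) - 1 + 1 = (n : ℤ) := by ring
        exact h11 ▸ degLE_lift _ _ hp
      · left; rfl
      · left; rfl
    · rw [pdiv, Fin.sum_univ_three]
      have h1 : (![lift 0 (fun α => 1 / ((α 0 : ℝ) + 1)) p, 0, 0] : Fin 3 → Poly3) 1 = 0 := rfl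
      have h2 : (![lift 0 (fun α => 1 / ((α 0 : ℝ) + 1)) p, 0, 0] : Fin 3 → Poly3) 2 = 0 := rfl
      rw [h1, h2, map_zero, map_zero, add_zero, add_zero]
      exact pderiv_lift_eq 0 _ (fun β => by
        have : ((β 0 : ℝ) + 1) ≠ 0 := by positivity
        field_simp) p
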